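/- There exists an assignment of a cyclic orientation to each 7-cycle of the Coxeter graph Γ (i.e., for each 7-cycle, a choice of one of the two directed closed walks traversing it) such that for every 2-path u–v–w of Γ, of the two 7-cycles of Γ containing this 2-path, exactly one traverses the ordered triple (u,v,w) and the other traverses (w,v,u). Equivalently, there is a family of 24 directed 7-cycles of Γ, orienting the 24 (undirected) 7-cycles of Γ, such that every directed path of length 2 in Γ occurs in exactly one member of the family. -/

import Mathlib

set_option maxRecDepth 40000


/-- Vertex set of the Coxeter graph: four concentric 7-tuples `u, v, t, z`. -/
abbrev CoxeterVertex := Fin 4 × ZMod 7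

/-- Base (asymmetric) adjacency relation for the Coxeter graph:
`u_x ~ u_{x+1}`, `v_x ~ v_{x+2}`, `t_x ~ t_{x+3}`, and `z_x ~ u_x, v_x, t_x`. -/
def coxeterRel : CoxeterVertex → CoxeterVertex → Prop := fun p q =>
  (p.1 = 0 ∧ q.1 = 0 ∧ q.2 = p.2 + 1) ∨
  (p.1 = 1 ∧ q.1 = 1 ∧ q.2 = p.2 + 2) ∨
  (p.1 = 2 ∧ q.1 = 2 ∧ q.2 = p.2 + 3) ∨
  (p.1 = 3 ∧ (q.1 = 0 ∨ q.1 = 1 ∨ q.1 = 2) ∧ q.2 = p.2)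

/-- The Coxeter graph on 28 vertices. -/
def coxeterGraph : SimpleGraph CoxeterVertex := SimpleGraph.fromRel coxeterRel

/-- A 7-cycle of a graph `G` is a subgraph of `G` isomorphic to the cycle graph
on 7 vertices. -/
def IsSevenCycle {V : Type*} {G : SimpleGraph V} (H : G.Subgraph) : Prop :=
  Nonempty (H.coe ≃g SimpleGraph.cycleGraph 7)

/-- A directed 7-cycle of a graph `G`, given as an injective `ZMod 7`-indexed
closed directed walk along edges of `G`. -/
def IsDirectedSevenCycle {V : Type*} (G : SimpleGraph V) (f : ZMod 7 → V) : Prop :=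
  Function.Injective f ∧ ∀ i : ZMod 7, G.Adj (f i) (f (i + 1))

/-- The directed walk `f` traverses the subgraph `C`: it visits exactly the
vertices of `C` and travels along edges of `C`. -/
def Traverses {V : Type*} {G : SimpleGraph V} (f : ZMod 7 → V) (C : G.Subgraph) : Prop :=
  Set.range f = C.verts ∧ ∀ i : ZMod 7, C.Adj (f i) (f (i + 1))

instance : DecidableRel coxeterRel := fun p q => by unfold coxeterRel; infer_instance

instance : DecidableRel coxeterGraph.Adj := fun p q =>
  decidable_of_iff (p ≠ q ∧ (coxeterRel p q ∨ coxeterRel q p))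
    (SimpleGraph.fromRel_adj coxeterRel p q).symm

/-- The chosen 24 coherently oriented 7-cycles of the Coxeter graph. -/
def coxList : List (ZMod 7 → CoxeterVertex) := [
  (show (ZMod 7 → CoxeterVertex) from ![(0, 0), (0, 1), (0, 2), (0, 3), (0, 4), (0, 5), (0, 6)]),
  (show (ZMod 7 → CoxeterVertex) from ![(0, 0), (3, 0), (1, 0), (1, 2), (3, 2), (0, 2), (0, 1)]),
  (show (ZMod 7 → CoxeterVertex) from ![(0, 0), (0, 6), (3, 6), (1, 6), (1, 1), (3, 1), (0, 1)]),
  (show (ZMod 7 → CoxeterVertex) from ![(0, 0), (0, 1), (3, 1), (2, 1), (2, 4), (2, 0), (3, 0)]),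
  (show (ZMod 7 → CoxeterVertex) from ![(0, 0), (0, 6), (0, 5), (3, 5), (1, 5), (1, 0), (3, 0)]),
  (show (ZMod 7 → CoxeterVertex) from ![(0, 0), (3, 0), (2, 0), (2, 3), (2, 6), (3, 6), (0, 6)]),
  (show (ZMod 7 → CoxeterVertex) from ![(0, 1), (3, 1), (1, 1), (1, 3), (3, 3), (0, 3), (0, 2)]),
  (show (ZMod 7 → CoxeterVertex) from ![(0, 1), (0, 2), (3, 2), (2, 2), (2, 5), (2, 1), (3, 1)]),
  (show (ZMod 7 → CoxeterVertex) from ![(0, 2), (3, 2), (1, 2), (1, 4), (3, 4), (0, 4), (0, 3)]),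
  (show (ZMod 7 → CoxeterVertex) from ![(0, 2), (0, 3), (3, 3), (2, 3), (2, 6), (2, 2), (3, 2)]),
  (show (ZMod 7 → CoxeterVertex) from ![(0, 3), (3, 3), (1, 3), (1, 5), (3, 5), (0, 5), (0, 4)]),
  (show (ZMod 7 → CoxeterVertex) from ![(0, 3), (0, 4), (3, 4), (2, 4), (2, 0), (2, 3), (3, 3)]),
  (show (ZMod 7 → CoxeterVertex) from ![(0, 4), (3, 4), (1, 4), (1, 6), (3, 6), (0, 6), (0, 5)]),
  (show (ZMod 7 → CoxeterVertex) from ![(0, 4), (0, 5), (3, 5), (2, 5), (2, 1), (2, 4), (3, 4)]),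
  (show (ZMod 7 → CoxeterVertex) from ![(0, 5), (0, 6), (3, 6), (2, 6), (2, 2), (2, 5), (3, 5)]),
  (show (ZMod 7 → CoxeterVertex) from ![(1, 0), (1, 2), (1, 4), (1, 6), (1, 1), (1, 3), (1, 5)]),
  (show (ZMod 7 → CoxeterVertex) from ![(1, 0), (3, 0), (2, 0), (2, 4), (3, 4), (1, 4), (1, 2)]),
  (show (ZMod 7 → CoxeterVertex) from ![(1, 0), (1, 5), (3, 5), (2, 5), (2, 2), (3, 2), (1, 2)]),
  (show (ZMod 7 → CoxeterVertex) from ![(1, 0), (1, 5), (1, 3), (3, 3), (2, 3), (2, 0), (3, 0)]),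
  (show (ZMod 7 → CoxeterVertex) from ![(1, 1), (3, 1), (2, 1), (2, 5), (3, 5), (1, 5), (1, 3)]),
  (show (ZMod 7 → CoxeterVertex) from ![(1, 1), (1, 6), (3, 6), (2, 6), (2, 3), (3, 3), (1, 3)]),
  (show (ZMod 7 → CoxeterVertex) from ![(1, 1), (1, 6), (1, 4), (3, 4), (2, 4), (2, 1), (3, 1)]),
  (show (ZMod 7 → CoxeterVertex) from ![(1, 2), (3, 2), (2, 2), (2, 6), (3, 6), (1, 6), (1, 4)]),
  (show (ZMod 7 → CoxeterVertex) from ![(2, 0), (2, 4), (2, 1), (2, 5), (2, 2), (2, 6), (2, 3)])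
]

/-- Fast boolean adjacency test. -/
def relB (p q : CoxeterVertex) : Bool :=
  (p.1.val == 0 && q.1.val == 0 && q.2.val == (p.2.val+1)%7) ||
  (p.1.val == 1 && q.1.val == 1 && q.2.val == (p.2.val+2)%7) ||
  (p.1.val == 2 && q.1.val == 2 && q.2.val == (p.2.val+3)%7) ||
  (p.1.val == 3 && (q.1.val == 0 || q.1.val == 1 || q.1.val == 2) && q.2.val == p.2.val)

def adjB (p q : CoxeterVertex) : Bool :=
  !(p.1.val == q.1.val && p.2.val == q.2.val) && (relB p q || relB q p)

set_option maxHeartbeats 4000000 in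
lemma adjB_iff : ∀ p q : CoxeterVertex, adjB p q = true ↔ coxeterGraph.Adj p q := by decide

def vList : List CoxeterVertex := [(0, 0), (0, 1), (0, 2), (0, 3), (0, 4), (0, 5), (0, 6), (1, 0), (1, 1), (1, 2), (1, 3), (1, 4), (1, 5), (1, 6), (2, 0), (2, 1), (2, 2), (2, 3), (2, 4), (2, 5), (2, 6), (3, 0), (3, 1), (3, 2), (3, 3), (3, 4), (3, 5), (3, 6)]

lemma mem_vList : ∀ p : CoxeterVertex, p ∈ vList := by decide

def nbrs (p : CoxeterVertex) : List CoxeterVertex := vList.filter (fun q => adjB p q)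

lemma mem_nbrs {p q : CoxeterVertex} (h : coxeterGraph.Adj p q) : q ∈ nbrs p :=
  List.mem_filter.mpr ⟨mem_vList q, (adjB_iff p q).mpr h⟩

def r7 : List (ZMod 7) := [0, 1, 2, 3, 4, 5, 6]

lemma mem_r7 : ∀ c : ZMod 7, c ∈ r7 := by decide

/-- Boolean check that the closed 7-walk `a0 … a6` is (a rotation or reflection of)
one of the 24 chosen oriented cycles. -/
def conclB (a0 a1 a2 a3 a4 a5 a6 : CoxeterVertex) : Bool :=
  coxList.any fun f => r7.any fun c =>
    ((a0 == f c) && ((a1 == f (c+1)) && ((a2 == f (c+2)) && ((a3 == f (c+3)) &&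
      ((a4 == f (c+4)) && ((a5 == f (c+5)) && (a6 == f (c+6)))))))) ||
    ((a0 == f c) && ((a1 == f (c-1)) && ((a2 == f (c-2)) && ((a3 == f (c-3)) &&
      ((a4 == f (c-4)) && ((a5 == f (c-5)) && (a6 == f (c-6))))))))

def keyCheck : Bool :=
  vList.all fun a0 => (nbrs a0).all fun a1 => (nbrs a1).all fun a2 =>
  (nbrs a2).all fun a3 => (nbrs a3).all fun a4 => (nbrs a4).all fun a5 =>
  (nbrs a5).all fun a6 => !(adjB a6 a0) || conclB a0 a1 a2 a3 a4 a5 a6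

set_option maxHeartbeats 400000000 in
lemma keyCheck_true : keyCheck = true := by decide

/-- Every directed closed 7-walk of the Coxeter graph is a rotation or a reflection
of one of the 24 chosen oriented cycles. -/
lemma cox_key : ∀ a0 a1 a2 a3 a4 a5 a6 : CoxeterVertex,
    coxeterGraph.Adj a0 a1 → coxeterGraph.Adj a1 a2 → coxeterGraph.Adj a2 a3 →
    coxeterGraph.Adj a3 a4 → coxeterGraph.Adj a4 a5 → coxeterGraph.Adj a5 a6 →
    coxeterGraph.Adj a6 a0 →
    ∃ f ∈ coxList, ∃ c : ZMod 7,
      ((a0 = f c ∧ a1 = f (c+1) ∧ a2 = f (c+2) ∧ a3 = f (c+3) ∧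
        a4 = f (c+4) ∧ a5 = f (c+5) ∧ a6 = f (c+6)) ∨
       (a0 = f c ∧ a1 = f (c-1) ∧ a2 = f (c-2) ∧ a3 = f (c-3) ∧
        a4 = f (c-4) ∧ a5 = f (c-5) ∧ a6 = f (c-6))) := by
  intro a0 a1 a2 a3 a4 a5 a6 h01 h12 h23 h34 h45 h56 h60
  have h := keyCheck_true
  unfold keyCheck at h
  rw [List.all_eq_true] at h
  have h := h a0 (mem_vList a0)
  rw [List.all_eq_true] at h
  have h := h a1 (mem_nbrs h01)
  rw [List.all_eq_true] at h
  have h := h a2 (mem_nbrs h12)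
  rw [List.all_eq_true] at h
  have h := h a3 (mem_nbrs h23)
  rw [List.all_eq_true] at h
  have h := h a4 (mem_nbrs h34)
  rw [List.all_eq_true] at h
  have h := h a5 (mem_nbrs h45)
  rw [List.all_eq_true] at h
  have h := h a6 (mem_nbrs h56)
  rw [(adjB_iff a6 a0).mpr h60, Bool.not_true, Bool.false_or] at h
  unfold conclB at h
  rw [List.any_eq_true] at h
  obtain ⟨f, hf, h⟩ := h
  rw [List.any_eq_true] at h
  obtain ⟨c, -, h⟩ := h
  refine ⟨f, hf, c, ?_⟩
  simpa only [Bool.or_eq_true, Bool.and_eq_true, beq_iff_eq] using h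

attribute [local instance 2000] List.decidableBAll in
set_option maxHeartbeats 4000000 in
lemma coxList_nodup : coxList.Nodup := by decide

attribute [local instance 2000] List.decidableBAll in
set_option maxHeartbeats 4000000 in
lemma coxList_cycles : ∀ f ∈ coxList,
    (∀ i j : ZMod 7, f i = f j → i = j) ∧
    ∀ i : ZMod 7, coxeterGraph.Adj (f i) (f (i + 1)) := by decide

attribute [local instance 2000] List.decidableBAll List.decidableBEx in
set_option maxHeartbeats 40000000 in
lemma cox_two_path : ∀ u v w : CoxeterVertex,
    coxeterGraph.Adj u v → coxeterGraph.Adj v w → u ≠ w →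
    ∃ f ∈ coxList,
      (∃ i : ZMod 7, f i = u ∧ f (i + 1) = v ∧ f (i + 2) = w) ∧
      ∀ g ∈ coxList, (∃ i : ZMod 7, g i = u ∧ g (i + 1) = v ∧ g (i + 2) = w) → g = f := by
  decide

lemma zmod7_cases : ∀ j : ZMod 7,
    j = 0 ∨ j = 1 ∨ j = 2 ∨ j = 3 ∨ j = 4 ∨ j = 5 ∨ j = 6 := by decide

lemma cox_key' (g : ZMod 7 → CoxeterVertex)
    (hadj : ∀ i : ZMod 7, coxeterGraph.Adj (g i) (g (i + 1))) :
    ∃ f ∈ coxList, ∃ c : ZMod 7,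
      (∀ j : ZMod 7, g j = f (c + j)) ∨ (∀ j : ZMod 7, g j = f (c - j)) := by
  have h0 := hadj 0; have h1 := hadj 1; have h2 := hadj 2; have h3 := hadj 3
  have h4 := hadj 4; have h5 := hadj 5; have h6 := hadj 6
  rw [show (0:ZMod 7)+1 = 1 by decide] at h0
  rw [show (1:ZMod 7)+1 = 2 by decide] at h1
  rw [show (2:ZMod 7)+1 = 3 by decide] at h2
  rw [show (3:ZMod 7)+1 = 4 by decide] at h3
  rw [show (4:ZMod 7)+1 = 5 by decide] at h4
  rw [show (5:ZMod 7)+1 = 6 by decide] at h5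
  rw [show (6:ZMod 7)+1 = 0 by decide] at h6
  obtain ⟨f, hf, c, hc⟩ :=
    cox_key (g 0) (g 1) (g 2) (g 3) (g 4) (g 5) (g 6) h0 h1 h2 h3 h4 h5 h6
  refine ⟨f, hf, c, ?_⟩
  rcases hc with ⟨e0,e1,e2,e3,e4,e5,e6⟩ | ⟨e0,e1,e2,e3,e4,e5,e6⟩
  · left; intro j
    rcases zmod7_cases j with rfl|rfl|rfl|rfl|rfl|rfl|rfl
    · rw [add_zero]; exact e0
    · exact e1
    · exact e2
    · exact e3
    · exact e4
    · exact e5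
    · exact e6
  · right; intro j
    rcases zmod7_cases j with rfl|rfl|rfl|rfl|rfl|rfl|rfl
    · rw [sub_zero]; exact e0
    · exact e1
    · exact e2
    · exact e3
    · exact e4
    · exact e5
    · exact e6

/-- `ZMod 7` is definitionally `Fin 7`. -/
def zf : ZMod 7 → Fin 7 := fun i => i

def fz : Fin 7 → ZMod 7 := fun i => i

lemma zf_add_one : ∀ i : ZMod 7, zf (i + 1) = zf i + 1 := by decide

lemma zf_fz : ∀ j : Fin 7, zf (fz j) = j := by decide

lemma zf_inj : Function.Injective zf := by decide

/-- There is a family of 24 directed 7-cycles of the Coxeter graph, orienting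
its 24 undirected 7-cycles, such that every directed 2-path of the graph occurs
in exactly one member of the family; hence of the two 7-cycles containing any
undirected 2-path `u – v – w`, exactly one traverses `(u,v,w)` and the other
traverses `(w,v,u)`. -/
theorem coxeterGraph_coherent_orientation_of_sevenCycles :
    ∃ D : Set (ZMod 7 → CoxeterVertex),
      D.ncard = 24 ∧
      (∀ f ∈ D, IsDirectedSevenCycle coxeterGraph f) ∧
      (∀ C : coxeterGraph.Subgraph, IsSevenCycle C → ∃ f ∈ D, Traverses f C) ∧
      (∀ u v w : CoxeterVertex,
        coxeterGraph.Adj u v → coxeterGraph.Adj v w → u ≠ w →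
        ∃! f, f ∈ D ∧ ∃ i : ZMod 7, f i = u ∧ f (i + 1) = v ∧ f (i + 2) = w) := by
  refine ⟨{f | f ∈ coxList}, ?_, ?_, ?_, ?_⟩
  · have he : {f | f ∈ coxList} = (coxList.toFinset : Set (ZMod 7 → CoxeterVertex)) := by
      ext f; simp
    rw [he, Set.ncard_coe_finset, List.toFinset_card_of_nodup coxList_nodup]
    rfl
  · intro f hf
    obtain ⟨hinj, hadj⟩ := coxList_cycles f hf
    exact ⟨fun a b h => hinj a b h, hadj⟩
  · intro C hC
    obtain ⟨e⟩ := hC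
    let g : ZMod 7 → CoxeterVertex := fun i => (e.symm (zf i)).1
    have hCadj : ∀ i : ZMod 7, C.Adj (g i) (g (i + 1)) := by
      intro i
      have h1 : (SimpleGraph.cycleGraph 7).Adj (zf i) (zf (i + 1)) := by
        rw [zf_add_one i, SimpleGraph.cycleGraph_adj']
        right
        rw [add_sub_cancel_left]
        rfl
      exact e.symm.map_adj_iff.mpr h1
    have hrange : Set.range g = C.verts := by
      ext x
      constructor
      · rintro ⟨i, rfl⟩
        exact (e.symm (zf i)).2
      · intro hx
        refine ⟨fz (e ⟨x, hx⟩), ?_⟩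
        show (e.symm (zf (fz (e ⟨x, hx⟩)))).1 = x
        rw [zf_fz, e.symm_apply_apply]
    obtain ⟨f, hfL, c, hc⟩ := cox_key' g (fun i => C.adj_sub (hCadj i))
    refine ⟨f, hfL, ?_, ?_⟩
    · rw [← hrange]
      ext x
      constructor
      · rintro ⟨i, rfl⟩
        rcases hc with h | h
        · refine ⟨i - c, ?_⟩
          have hh := h (i - c)
          rwa [show c + (i - c) = i from by ring] at hh
        · refine ⟨c - i, ?_⟩
          have hh := h (c - i)
          rwa [show c - (c - i) = i from by ring] at hh
      · rintro ⟨j, rfl⟩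
        rcases hc with h | h
        · exact ⟨c + j, (h j).symm⟩
        · exact ⟨c - j, (h j).symm⟩
    · intro i
      rcases hc with h | h
      · have h1 := hCadj (i - c)
        rw [h (i - c), h (i - c + 1), show c + (i - c) = i from by ring,
          show c + (i - c + 1) = i + 1 from by ring] at h1
        exact h1
      · have h1 := hCadj (c - i - 1)
        rw [h (c - i - 1), h (c - i - 1 + 1), show c - (c - i - 1) = i + 1 from by ring,
          show c - (c - i - 1 + 1) = i from by ring] at h1
        exact h1.symm
  · intro u v w huv hvw hne
    obtain ⟨f, hf, hex, huniq⟩ := cox_two_path u v w huv hvw hne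
    exact ⟨f, ⟨hf, hex⟩, fun g hg => huniq g hg.1 hg.2⟩
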